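/- If (X, Y) is a bivariate normal random vector with mean (α cos θ, α sin θ) and covariance matrix β² I₂ (β > 0, α ≥ 0, θ ∈ ℝ), then √(X² + Y²) has the Rice density f(x) = (x/β²) exp(−(x² + α²)/(2β²)) I₀(xα/β²) for x ≥ 0, where I₀ is the modified Bessel function of the first kind of order zero. -/

import Mathlib

open Real MeasureTheory ProbabilityTheory Set
open scoped NNReal ENNReal

noncomputable def besselI0 (z : ℝ) : ℝ :=
  (1/Real.pi) * ∫ t in (0:ℝ)..Real.pi, Real.exp (z * Real.cos t)

lemma lintegral_comp_polarCoord_symm' (f : ℝ × ℝ → ENNReal) :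
    (∫⁻ p in polarCoord.target, ENNReal.ofReal p.1 * f (polarCoord.symm p)) = ∫⁻ p, f p := by
  set B : ℝ × ℝ → ℝ × ℝ →L[ℝ] ℝ × ℝ := fun p =>
    LinearMap.toContinuousLinearMap (Matrix.toLin (Module.Basis.finTwoProd ℝ) (Module.Basis.finTwoProd ℝ)
      !![Real.cos p.2, -p.1 * Real.sin p.2; Real.sin p.2, p.1 * Real.cos p.2]) with hB
  have A : ∀ p ∈ polarCoord.target, HasFDerivWithinAt polarCoord.symm (B p) polarCoord.target p :=
    fun p _ => (hasFDerivAt_polarCoord_symm p).hasFDerivWithinAt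
  have B_det : ∀ p, (B p).det = p.1 := by
    intro p
    conv_rhs => rw [← one_mul p.1, ← cos_sq_add_sin_sq p.2]
    simp only [hB, neg_mul, LinearMap.det_toContinuousLinearMap, LinearMap.det_toLin,
      Matrix.det_fin_two_of, sub_neg_eq_add]
    ring
  symm
  calc
    ∫⁻ p, f p = ∫⁻ p in polarCoord.source, f p := by
      rw [← setLIntegral_univ]
      exact setLIntegral_congr polarCoord_source_ae_eq_univ.symm
    _ = ∫⁻ p in polarCoord.symm '' polarCoord.target, f p := by
      rw [OpenPartialHomeomorph.symm_image_target_eq_source]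
    _ = ∫⁻ p in polarCoord.target, ENNReal.ofReal |(B p).det| * f (polarCoord.symm p) := by
      exact lintegral_image_eq_lintegral_abs_det_fderiv_mul volume
        polarCoord.open_target.measurableSet A polarCoord.symm.injOn f
    _ = ∫⁻ p in polarCoord.target, ENNReal.ofReal p.1 * f (polarCoord.symm p) := by
      refine setLIntegral_congr_fun polarCoord.open_target.measurableSet
        (fun x hx => ?_)
      rw [B_det, abs_of_pos hx.1]

lemma integral_cos_shift (c θ : ℝ) :
    ∫ t in (-Real.pi)..Real.pi, Real.exp (c * Real.cos (t - θ)) = 2 * Real.pi * besselI0 c := by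
  have hper : Function.Periodic (fun t => Real.exp (c * Real.cos t)) (2 * Real.pi) := by
    intro t; simp [Real.cos_add_two_pi]
  have h1 : ∫ t in (-Real.pi)..Real.pi, Real.exp (c * Real.cos (t - θ))
      = ∫ t in (-Real.pi - θ)..(Real.pi - θ), Real.exp (c * Real.cos t) :=
    intervalIntegral.integral_comp_sub_right (fun t => Real.exp (c * Real.cos t)) θ
  have h2 : ∫ t in (-Real.pi - θ)..(Real.pi - θ), Real.exp (c * Real.cos t)
      = ∫ t in (-Real.pi)..Real.pi, Real.exp (c * Real.cos t) := by
    have := hper.intervalIntegral_add_eq (-Real.pi - θ) (-Real.pi)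
    have e1 : -Real.pi - θ + 2 * Real.pi = Real.pi - θ := by ring
    have e2 : -Real.pi + 2 * Real.pi = Real.pi := by ring
    rwa [e1, e2] at this
  have hcont : Continuous fun t => Real.exp (c * Real.cos t) := by continuity
  have h3 : ∫ t in (-Real.pi)..(0:ℝ), Real.exp (c * Real.cos t)
      = ∫ t in (0:ℝ)..Real.pi, Real.exp (c * Real.cos t) := by
    have := intervalIntegral.integral_comp_neg (a := (0:ℝ)) (b := Real.pi)
      (fun t => Real.exp (c * Real.cos t))
    simp only [Real.cos_neg, neg_zero] at this
    rw [← this]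
  have h4 : ∫ t in (-Real.pi)..Real.pi, Real.exp (c * Real.cos t)
      = (∫ t in (-Real.pi)..(0:ℝ), Real.exp (c * Real.cos t))
        + ∫ t in (0:ℝ)..Real.pi, Real.exp (c * Real.cos t) :=
    (intervalIntegral.integral_add_adjacent_intervals
      (hcont.intervalIntegrable _ _) (hcont.intervalIntegrable _ _)).symm
  rw [h1, h2, h4, h3, besselI0]
  field_simp
  ring

lemma pdf_prod_eq (α β θ : ℝ) (hβ : 0 < β) (r t : ℝ) :
    gaussianPDFReal (α * Real.cos θ) ((β^2).toNNReal) (r * Real.cos t)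
      * gaussianPDFReal (α * Real.sin θ) ((β^2).toNNReal) (r * Real.sin t)
    = (2 * Real.pi * β^2)⁻¹ * Real.exp (-(r^2 + α^2)/(2*β^2))
        * Real.exp ((r*α/β^2) * Real.cos (t - θ)) := by
  have hvr : (((β^2).toNNReal : ℝ≥0) : ℝ) = β^2 := Real.coe_toNNReal _ (sq_nonneg β)
  have hβ2 : (0:ℝ) < β^2 := by positivity
  have hπ : (0:ℝ) < Real.pi := Real.pi_pos
  have hsq : Real.sqrt (2 * Real.pi * β^2) * Real.sqrt (2 * Real.pi * β^2)
      = 2 * Real.pi * β^2 := Real.mul_self_sqrt (by positivity)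
  have h1 := Real.sin_sq_add_cos_sq t
  have h2 := Real.sin_sq_add_cos_sq θ
  have hE : (-(r * Real.cos t - α * Real.cos θ)^2 / (2*β^2))
        + (-(r * Real.sin t - α * Real.sin θ)^2 / (2*β^2))
      = -(r^2 + α^2)/(2*β^2)
        + (r*α/β^2) * (Real.cos t * Real.cos θ + Real.sin t * Real.sin θ) := by
    field_simp
    linear_combination (-r^2) * h1 + (-α^2) * h2
  rw [gaussianPDFReal, gaussianPDFReal, hvr]
  calc (Real.sqrt (2 * Real.pi * β^2))⁻¹ * Real.exp (-(r * Real.cos t - α * Real.cos θ)^2 / (2*β^2))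
        * ((Real.sqrt (2 * Real.pi * β^2))⁻¹
          * Real.exp (-(r * Real.sin t - α * Real.sin θ)^2 / (2*β^2)))
      = (Real.sqrt (2 * Real.pi * β^2) * Real.sqrt (2 * Real.pi * β^2))⁻¹
          * Real.exp ((-(r * Real.cos t - α * Real.cos θ)^2 / (2*β^2))
            + (-(r * Real.sin t - α * Real.sin θ)^2 / (2*β^2))) := by
        rw [Real.exp_add, mul_inv]; ring
    _ = (2 * Real.pi * β^2)⁻¹ * Real.exp (-(r^2 + α^2)/(2*β^2)
          + (r*α/β^2) * (Real.cos t * Real.cos θ + Real.sin t * Real.sin θ)) := by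
        rw [hsq, hE]
    _ = _ := by rw [Real.exp_add, Real.cos_sub]; ring

lemma inner_integral (α β θ : ℝ) (hβ : 0 < β) {r : ℝ} (hr : 0 < r) :
    (∫⁻ t in Set.Ioo (-Real.pi) Real.pi, ENNReal.ofReal
      (r * (gaussianPDFReal (α * Real.cos θ) ((β^2).toNNReal) (r * Real.cos t)
        * gaussianPDFReal (α * Real.sin θ) ((β^2).toNNReal) (r * Real.sin t))))
    = ENNReal.ofReal (r/β^2 * Real.exp (-(r^2 + α^2)/(2*β^2)) * besselI0 (r*α/β^2)) := by
  have hπ : (0:ℝ) < Real.pi := Real.pi_pos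
  have hβ2 : (0:ℝ) < β^2 := by positivity
  set K : ℝ := r * (2 * Real.pi * β^2)⁻¹ * Real.exp (-(r^2 + α^2)/(2*β^2)) with hK
  have hK0 : 0 ≤ K := by positivity
  have hfun : ∀ t : ℝ, r * (gaussianPDFReal (α * Real.cos θ) ((β^2).toNNReal) (r * Real.cos t)
        * gaussianPDFReal (α * Real.sin θ) ((β^2).toNNReal) (r * Real.sin t))
      = K * Real.exp ((r*α/β^2) * Real.cos (t - θ)) := by
    intro t
    rw [pdf_prod_eq α β θ hβ r t, hK]; ring
  simp_rw [hfun]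
  have hcont : Continuous fun t => K * Real.exp ((r*α/β^2) * Real.cos (t - θ)) :=
    continuous_const.mul (Real.continuous_exp.comp (continuous_const.mul
      (Real.continuous_cos.comp (continuous_id.sub continuous_const))))
  have hint : IntegrableOn (fun t => K * Real.exp ((r*α/β^2) * Real.cos (t - θ)))
      (Set.Ioo (-Real.pi) Real.pi) :=
    (hcont.integrableOn_Icc).mono_set Set.Ioo_subset_Icc_self
  rw [← ofReal_integral_eq_lintegral_ofReal hint
    (Filter.Eventually.of_forall fun t => by positivity)]
  congr 1
  rw [← MeasureTheory.integral_Ioc_eq_integral_Ioo,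
    ← intervalIntegral.integral_of_le (by linarith),
    intervalIntegral.integral_const_mul, integral_cos_shift]
  rw [hK, besselI0]
  field_simp

lemma gaussian_prod_withDensity (m1 m2 : ℝ) (v : ℝ≥0) (hv : v ≠ 0) :
    (gaussianReal m1 v).prod (gaussianReal m2 v)
      = (volume.prod volume).withDensity
          (fun p => gaussianPDF m1 v p.1 * gaussianPDF m2 v p.2) := by
  refine Measure.prod_eq fun s t hs ht => ?_
  rw [withDensity_apply _ (hs.prod ht), ← Measure.prod_restrict,
    lintegral_prod_mul (measurable_gaussianPDF m1 v).aemeasurable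
      (measurable_gaussianPDF m2 v).aemeasurable,
    gaussianReal_apply m1 hv s, gaussianReal_apply m2 hv t]

theorem rice_from_bivariate_normal (α β θ : ℝ) (hα : 0 ≤ α) (hβ : 0 < β)
    {Ω : Type*} [MeasureSpace Ω] [IsProbabilityMeasure (ℙ : Measure Ω)]
    (X Y : Ω → ℝ) (hX : Measurable X) (hY : Measurable Y)
    (hjoint : Measure.map (fun ω => (X ω, Y ω)) ℙ =
      (gaussianReal (α * Real.cos θ) ((β^2).toNNReal)).prod
        (gaussianReal (α * Real.sin θ) ((β^2).toNNReal))) :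
    Measure.map (fun ω => Real.sqrt ((X ω)^2 + (Y ω)^2)) ℙ =
      volume.withDensity (fun x => ENNReal.ofReal
        (if 0 ≤ x then
          x/β^2 * Real.exp (-(x^2 + α^2)/(2*β^2)) * besselI0 (x*α/β^2)
        else 0)) := by
  have hπ : (0:ℝ) < Real.pi := Real.pi_pos
  have hβ2 : (0:ℝ) < β^2 := by positivity
  have hv : ((β^2).toNNReal : ℝ≥0) ≠ 0 := ne_of_gt (Real.toNNReal_pos.mpr hβ2)
  set v : ℝ≥0 := (β^2).toNNReal with hvdef
  set m1 : ℝ := α * Real.cos θ with hm1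
  set m2 : ℝ := α * Real.sin θ with hm2
  set f : ℝ × ℝ → ℝ := fun p => Real.sqrt (p.1^2 + p.2^2) with hfdef
  have hfc : Continuous f := ((continuous_fst.pow 2).add (continuous_snd.pow 2)).sqrt
  have hfm : Measurable f := hfc.measurable
  set D : ℝ × ℝ → ℝ≥0∞ := fun p => gaussianPDF m1 v p.1 * gaussianPDF m2 v p.2 with hD
  have hDm : Measurable D :=
    ((measurable_gaussianPDF m1 v).comp measurable_fst).mul
      ((measurable_gaussianPDF m2 v).comp measurable_snd)
  have hmapmap : Measure.map (fun ω => Real.sqrt ((X ω)^2 + (Y ω)^2)) ℙ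
      = Measure.map f ((gaussianReal m1 v).prod (gaussianReal m2 v)) := by
    rw [← hjoint, Measure.map_map hfm (hX.prodMk hY)]; rfl
  rw [hmapmap, gaussian_prod_withDensity m1 m2 v hv]
  ext s hs
  rw [Measure.map_apply hfm hs, withDensity_apply _ (hfm hs), withDensity_apply _ hs]
  -- abbreviations
  set gρ : ℝ → ℝ≥0∞ := fun x =>
    ENNReal.ofReal (x/β^2 * Real.exp (-(x^2 + α^2)/(2*β^2)) * besselI0 (x*α/β^2)) with hgρ
  set G : ℝ × ℝ → ℝ≥0∞ := fun q =>
    ENNReal.ofReal q.1 * (f ⁻¹' s).indicator D (q.1 * Real.cos q.2, q.1 * Real.sin q.2) with hG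
  have hindm : Measurable ((f ⁻¹' s).indicator D) := hDm.indicator (hfm hs)
  have hGm : Measurable G :=
    (measurable_fst.ennreal_ofReal).mul (hindm.comp
      ((measurable_fst.mul measurable_snd.cos).prodMk (measurable_fst.mul measurable_snd.sin)))
  calc ∫⁻ p in f ⁻¹' s, D p ∂(volume.prod volume)
      = ∫⁻ p, (f ⁻¹' s).indicator D p ∂(volume.prod volume) :=
        (lintegral_indicator (hfm hs) D).symm
    _ = ∫⁻ q in polarCoord.target,
          ENNReal.ofReal q.1 * (f ⁻¹' s).indicator D (polarCoord.symm q) :=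
        (lintegral_comp_polarCoord_symm' _).symm
    _ = ∫⁻ q in (Set.Ioi (0:ℝ)) ×ˢ (Set.Ioo (-Real.pi) Real.pi), G q := by
        rw [polarCoord_target]
        refine setLIntegral_congr_fun ((measurableSet_Ioi).prod measurableSet_Ioo)
          (fun q _ => ?_)
        simp only [hG, polarCoord_symm_apply]
    _ = ∫⁻ a in Set.Ioi (0:ℝ), ∫⁻ b in Set.Ioo (-Real.pi) Real.pi, G (a, b) := by
        rw [Measure.volume_eq_prod, ← Measure.prod_restrict, lintegral_prod _ hGm.aemeasurable]
    _ = ∫⁻ a in Set.Ioi (0:ℝ), s.indicator gρ a := by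
        refine setLIntegral_congr_fun measurableSet_Ioi
          (fun r hr => ?_)
        have hr : (0:ℝ) < r := hr
        have hmem : ∀ b : ℝ, ((r * Real.cos b, r * Real.sin b) ∈ f ⁻¹' s) ↔ r ∈ s := by
          intro b
          have hsum : (r * Real.cos b)^2 + (r * Real.sin b)^2 = r^2 := by
            have := Real.sin_sq_add_cos_sq b; nlinarith
          simp only [Set.mem_preimage, hfdef, hsum, Real.sqrt_sq hr.le]
        by_cases hrs : r ∈ s
        · have h1 : ∀ b : ℝ, G (r, b) = ENNReal.ofReal
              (r * (gaussianPDFReal m1 v (r * Real.cos b) * gaussianPDFReal m2 v (r * Real.sin b))) := by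
            intro b
            rw [hG]
            simp only
            rw [Set.indicator_of_mem ((hmem b).mpr hrs), hD]
            simp only [gaussianPDF]
            rw [← ENNReal.ofReal_mul (gaussianPDFReal_nonneg m1 v _),
              ← ENNReal.ofReal_mul hr.le]
          rw [setLIntegral_congr_fun measurableSet_Ioo
            (fun b _ => h1 b)]
          have key := inner_integral α β θ hβ hr
          rw [← hvdef, ← hm1, ← hm2] at key
          rw [key, Set.indicator_of_mem hrs, hgρ]
        · have h0 : ∀ b : ℝ, G (r, b) = 0 := by
            intro b
            rw [hG]
            simp only
            rw [Set.indicator_of_notMem (fun hc => hrs ((hmem b).mp hc)), mul_zero]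
          rw [setLIntegral_congr_fun measurableSet_Ioo
            (fun b _ => h0 b), lintegral_zero,
            Set.indicator_of_notMem hrs]
    _ = ∫⁻ x in s, ENNReal.ofReal
          (if 0 ≤ x then x/β^2 * Real.exp (-(x^2 + α^2)/(2*β^2)) * besselI0 (x*α/β^2) else 0) := by
        rw [← lintegral_indicator measurableSet_Ioi, ← lintegral_indicator hs]
        refine lintegral_congr fun x => ?_
        by_cases hxs : x ∈ s
        · by_cases hx0 : 0 < x
          · rw [Set.indicator_of_mem (Set.mem_Ioi.mpr hx0) (s.indicator gρ),
              Set.indicator_of_mem hxs gρ, Set.indicator_of_mem hxs, if_pos hx0.le]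
          · have hx0' : x ≤ 0 := le_of_not_gt hx0
            have hz : ENNReal.ofReal
                (if 0 ≤ x then x/β^2 * Real.exp (-(x^2 + α^2)/(2*β^2)) * besselI0 (x*α/β^2) else 0)
                = 0 := by
              rcases lt_or_eq_of_le hx0' with h | h
              · rw [if_neg (not_le.mpr h), ENNReal.ofReal_zero]
              · rw [if_pos (le_of_eq h.symm), h]
                norm_num
            rw [Set.indicator_of_notMem (fun hc => hx0 (Set.mem_Ioi.mp hc)),
              Set.indicator_of_mem hxs, hz]
        · simp [Set.indicator, hxs]
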